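/- Let R̂ > 0 and 0 < ξ < R̂ be real numbers, K > 0, and let F : ℂ → ℂ be an entire function such that for all k ∈ ℂ with |k| ≥ 1, |F(k) + R̂·cos(k(R̂−ξ)) + sin(k(R̂−ξ))/k| ≤ (K/|k|)·exp(|Im k|·(R̂−ξ)). Then F has exponential order one and type R̂−ξ; that is, writing M(r) := sup_{|k| = r} |F(k)|, one has limsup_{r→∞} (log log M(r))/(log r) = 1 and limsup_{r→∞} (log M(r))/r = R̂ − ξ. -/

import Mathlib

open Filter Topology


lemma my_norm_cos_le (z : ℂ) : ‖Complex.cos z‖ ≤ Real.exp |z.im| := by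
  rw [Complex.cos, norm_div]
  have h1 : ‖Complex.exp (z*Complex.I) + Complex.exp (-z*Complex.I)‖
      ≤ Real.exp (-z.im) + Real.exp z.im := by
    refine (norm_add_le _ _).trans ?_
    rw [Complex.norm_exp, Complex.norm_exp]
    simp
  have h2 : Real.exp (-z.im) + Real.exp z.im ≤ 2 * Real.exp |z.im| := by
    have := Real.exp_le_exp.2 (neg_le_abs z.im)
    have := Real.exp_le_exp.2 (le_abs_self z.im)
    linarith
  have : ‖(2:ℂ)‖ = 2 := by norm_num
  rw [this]
  linarith

lemma my_norm_sin_le (z : ℂ) : ‖Complex.sin z‖ ≤ Real.exp |z.im| := by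
  rw [Complex.sin, norm_div, norm_mul]
  have h1 : ‖Complex.exp (-z*Complex.I) - Complex.exp (z*Complex.I)‖
      ≤ Real.exp z.im + Real.exp (-z.im) := by
    refine (norm_sub_le _ _).trans ?_
    rw [Complex.norm_exp, Complex.norm_exp]
    simp
  have h2 : Real.exp (-z.im) + Real.exp z.im ≤ 2 * Real.exp |z.im| := by
    have := Real.exp_le_exp.2 (neg_le_abs z.im)
    have := Real.exp_le_exp.2 (le_abs_self z.im)
    linarith
  have hI : ‖Complex.I‖ = 1 := by simp
  have h2' : ‖(2:ℂ)‖ = 2 := by norm_num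
  rw [hI, h2', mul_one]
  linarith

lemma my_log_ratio (a C : ℝ) (ha : 0 < a) :
    Tendsto (fun r => Real.log (a*r + C) / Real.log r) atTop (𝓝 1) := by
  have h0 : Tendsto (fun r : ℝ => a + C/r) atTop (𝓝 a) := by
    simpa using (tendsto_const_nhds : Tendsto (fun _ : ℝ => a) atTop (𝓝 a)).add ((tendsto_const_nhds : Tendsto (fun _ : ℝ => C) atTop (𝓝 C)).div_atTop tendsto_id)
  have h1 : Tendsto (fun r : ℝ => Real.log (a + C/r)) atTop (𝓝 (Real.log a)) :=
    (Real.continuousAt_log ha.ne').tendsto.comp h0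
  have h2 : Tendsto (fun r : ℝ => Real.log (a+C/r) / Real.log r) atTop (𝓝 0) :=
    h1.div_atTop Real.tendsto_log_atTop
  have key : Tendsto (fun r : ℝ => 1 + Real.log (a+C/r)/Real.log r) atTop (𝓝 1) := by
    simpa using tendsto_const_nhds.add h2
  refine Tendsto.congr' ?_ key
  filter_upwards [eventually_gt_atTop (max 1 (2*|C|/a))] with r hr
  have hr1 : 1 < r := lt_of_le_of_lt (le_max_left _ _) hr
  have hr0 : 0 < r := lt_trans one_pos hr1
  have hC : |C|/r < a/2 := by
    have h3 : 2*|C|/a < r := lt_of_le_of_lt (le_max_right _ _) hr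
    rw [div_lt_iff₀ ha] at h3
    rw [div_lt_iff₀ hr0]
    nlinarith
  have hCC : -|C|/r ≤ C/r := by gcongr; exact neg_abs_le C
  have hpos : 0 < a + C/r := by
    have : -|C|/r = -(|C|/r) := by ring
    rw [this] at hCC
    linarith
  have hlogr : Real.log r ≠ 0 := (Real.log_pos hr1).ne'
  have heq : a*r + C = r*(a + C/r) := by field_simp
  rw [heq, Real.log_mul hr0.ne' hpos.ne', add_div, div_self hlogr]


/-- **Lemma 3.2.** An entire function `F` satisfying the asymptotic estimate (3.4),
`|F(k) + Rhat cos(k(Rhat−ξ)) + sin(k(Rhat−ξ))/k| ≤ (K/|k|) exp(|Im k|(Rhat−ξ))` for `|k| ≥ 1`,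
has exponential order one and type `Rhat − ξ`. -/
theorem order_one_type_R_sub_xi
    (Rhat ξ K : ℝ) (hR : 0 < Rhat) (hξ0 : 0 < ξ) (hξR : ξ < Rhat) (hK : 0 < K)
    (F : ℂ → ℂ) (hF : Differentiable ℂ F)
    (hasym : ∀ k : ℂ, 1 ≤ ‖k‖ →
      ‖F k + (Rhat : ℂ) * Complex.cos (k * (Rhat - ξ)) + Complex.sin (k * (Rhat - ξ)) / k‖
        ≤ (K / ‖k‖) * Real.exp (|k.im| * (Rhat - ξ))) :
    (limsup (fun r : ℝ =>
        Real.log (Real.log (sSup ((fun k => ‖F k‖) '' Metric.sphere (0 : ℂ) r)))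
          / Real.log r) atTop = 1) ∧
    (limsup (fun r : ℝ =>
        Real.log (sSup ((fun k => ‖F k‖) '' Metric.sphere (0 : ℂ) r)) / r) atTop
      = Rhat - ξ) := by
  set a : ℝ := Rhat - ξ with ha_def
  have ha : 0 < a := sub_pos.2 hξR
  set M : ℝ → ℝ := fun r => sSup ((fun k => ‖F k‖) '' Metric.sphere (0:ℂ) r) with hM
  set c₂ : ℝ := Rhat + 1 + K with hc₂
  set c₁ : ℝ := Rhat / 4 with hc₁
  have hc₂pos : 0 < c₂ := by positivity
  have hc₁pos : 0 < c₁ := by positivity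
  -- upper bound
  have hub : ∀ r : ℝ, 1 ≤ r → M r ≤ c₂ * Real.exp (a*r) := by
    intro r hr
    apply Real.sSup_le ?_ (by positivity)
    rintro x ⟨k, hk, rfl⟩
    have hkr : ‖k‖ = r := by simpa using mem_sphere_zero_iff_norm.1 hk
    have hk1 : 1 ≤ ‖k‖ := by rw [hkr]; exact hr
    have hkpos : (0:ℝ) < ‖k‖ := lt_of_lt_of_le one_pos hk1
    have h1 := hasym k hk1
    set A : ℂ := (Rhat : ℂ) * Complex.cos (k * ((Rhat:ℂ) - ξ)) with hA_def
    set B : ℂ := Complex.sin (k * ((Rhat:ℂ) - ξ)) / k with hB_def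
    have himk : |k.im| ≤ r := by
      have := Complex.abs_im_le_norm k
      rwa [hkr] at this
    have him : |(k * ((Rhat:ℂ) - (ξ:ℂ))).im| ≤ r * a := by
      have h2 : ((Rhat:ℂ) - (ξ:ℂ)) = ((a:ℝ):ℂ) := by push_cast [ha_def]; ring
      rw [h2]
      have h3 : (k * ((a:ℝ):ℂ)).im = k.im * a := by simp [Complex.mul_im]
      rw [h3, abs_mul, abs_of_nonneg ha.le]
      nlinarith [abs_nonneg k.im]
    have hexp : Real.exp |(k * ((Rhat:ℂ) - (ξ:ℂ))).im| ≤ Real.exp (a*r) := by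
      rw [mul_comm a r]; exact Real.exp_le_exp.2 him
    have hA : ‖A‖ ≤ Rhat * Real.exp (a*r) := by
      rw [hA_def, norm_mul, Complex.norm_real, Real.norm_eq_abs, abs_of_pos hR]
      exact mul_le_mul_of_nonneg_left ((my_norm_cos_le _).trans hexp) hR.le
    have hB : ‖B‖ ≤ Real.exp (a*r) := by
      rw [hB_def, norm_div]
      calc ‖Complex.sin (k * ((Rhat:ℂ) - ξ))‖ / ‖k‖
          ≤ Real.exp (a*r) / 1 := by
            apply div_le_div₀ (Real.exp_pos _).le ((my_norm_sin_le _).trans hexp) one_pos hk1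
        _ = Real.exp (a*r) := div_one _
    have hRHS : (K/‖k‖) * Real.exp (|k.im| * a) ≤ K * Real.exp (a*r) := by
      have h4 : K/‖k‖ ≤ K := div_le_self hK.le hk1
      have h5 : Real.exp (|k.im| * a) ≤ Real.exp (a*r) := by
        apply Real.exp_le_exp.2; nlinarith [abs_nonneg k.im]
      have := Real.exp_pos (|k.im| * a)
      nlinarith [div_pos hK hkpos]
    have key : ‖F k‖ ≤ ‖F k + A + B‖ + ‖A‖ + ‖B‖ := by
      have h6 : F k = (F k + A + B) - A - B := by ring
      calc ‖F k‖ = ‖(F k + A + B) - A - B‖ := by rw [← h6]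
        _ ≤ ‖(F k + A + B) - A‖ + ‖B‖ := norm_sub_le _ _
        _ ≤ ‖F k + A + B‖ + ‖A‖ + ‖B‖ := by
            have := norm_sub_le (F k + A + B) A; linarith
    have : ‖F k + A + B‖ ≤ K * Real.exp (a*r) := le_trans h1 hRHS
    rw [hc₂]
    have hexpand : (Rhat + 1 + K) * Real.exp (a*r)
        = K * Real.exp (a*r) + Rhat * Real.exp (a*r) + Real.exp (a*r) := by ring
    rw [hexpand]
    linarith
  -- lower bound
  have hlb : ∀ r : ℝ, max 1 (4*K/Rhat) ≤ r → c₁ * Real.exp (a*r) ≤ M r := by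
    intro r hr
    have hr1 : 1 ≤ r := le_trans (le_max_left _ _) hr
    have hr0 : 0 < r := lt_of_lt_of_le one_pos hr1
    have hrK : 4*K/Rhat ≤ r := le_trans (le_max_right _ _) hr
    set k : ℂ := (r:ℂ) * Complex.I with hk_def
    have hknorm : ‖k‖ = r := by
      rw [hk_def, norm_mul, Complex.norm_real, Complex.norm_I, mul_one, Real.norm_eq_abs, abs_of_pos hr0]
    have hmem : k ∈ Metric.sphere (0:ℂ) r := mem_sphere_zero_iff_norm.2 hknorm
    have hbdd : BddAbove ((fun k => ‖F k‖) '' Metric.sphere (0:ℂ) r) :=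
      ((isCompact_sphere (0:ℂ) r).image hF.continuous.norm).bddAbove
    have hle : ‖F k‖ ≤ M r := le_csSup hbdd ⟨k, hmem, rfl⟩
    have h1 := hasym k (by rw [hknorm]; exact hr1)
    have hkim : k.im = r := by simp [hk_def]
    have harg : k * ((Rhat:ℂ) - (ξ:ℂ)) = ((r*a : ℝ):ℂ) * Complex.I := by
      rw [hk_def]; push_cast [ha_def]; ring
    have hcos : Complex.cos (k * ((Rhat:ℂ) - (ξ:ℂ))) = ((Real.cosh (r*a) : ℝ):ℂ) := by
      rw [harg, Complex.cos_mul_I, Complex.ofReal_cosh]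
    have hsin : Complex.sin (k * ((Rhat:ℂ) - (ξ:ℂ))) = ((Real.sinh (r*a) : ℝ):ℂ) * Complex.I := by
      rw [harg, Complex.sin_mul_I, Complex.ofReal_sinh]
    have hSval : (Rhat:ℂ) * Complex.cos (k * ((Rhat:ℂ) - (ξ:ℂ)))
        + Complex.sin (k * ((Rhat:ℂ) - (ξ:ℂ))) / k
        = ((Rhat * Real.cosh (r*a) + Real.sinh (r*a)/r : ℝ):ℂ) := by
      rw [hcos, hsin, hk_def]
      rw [mul_div_mul_right _ _ Complex.I_ne_zero]
      push_cast
      ring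
    have hSnorm : ‖(Rhat:ℂ) * Complex.cos (k * ((Rhat:ℂ) - (ξ:ℂ)))
        + Complex.sin (k * ((Rhat:ℂ) - (ξ:ℂ))) / k‖
        = Rhat * Real.cosh (r*a) + Real.sinh (r*a)/r := by
      rw [hSval, Complex.norm_real, Real.norm_eq_abs, abs_of_pos]
      have h2 : 0 < Real.cosh (r*a) := Real.cosh_pos _
      have h3 : 0 ≤ Real.sinh (r*a) := Real.sinh_nonneg_iff.2 (by positivity)
      have := div_nonneg h3 hr0.le
      nlinarith
    have hcosh : Real.exp (r*a) / 2 ≤ Real.cosh (r*a) := by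
      rw [Real.cosh_eq]
      have := Real.exp_pos (-(r*a))
      linarith
    have htri : ‖(Rhat:ℂ) * Complex.cos (k * ((Rhat:ℂ) - (ξ:ℂ)))
        + Complex.sin (k * ((Rhat:ℂ) - (ξ:ℂ))) / k‖
        ≤ ‖F k + (Rhat:ℂ) * Complex.cos (k * ((Rhat:ℂ) - (ξ:ℂ)))
            + Complex.sin (k * ((Rhat:ℂ) - (ξ:ℂ))) / k‖ + ‖F k‖ := by
      set S₁ := (Rhat:ℂ) * Complex.cos (k * ((Rhat:ℂ) - (ξ:ℂ)))
      set S₂ := Complex.sin (k * ((Rhat:ℂ) - (ξ:ℂ))) / k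
      calc ‖S₁ + S₂‖ = ‖(F k + S₁ + S₂) - F k‖ := by ring_nf
        _ ≤ ‖F k + S₁ + S₂‖ + ‖F k‖ := norm_sub_le _ _
    have hRHSval : (K/‖k‖) * Real.exp (|k.im| * a) = (K/r) * Real.exp (r*a) := by
      rw [hknorm, hkim, abs_of_pos hr0]
    rw [hRHSval] at h1
    have hKr : K/r ≤ Rhat/4 := by
      rw [div_le_div_iff₀ hr0 (by norm_num : (0:ℝ) < 4)]
      rw [div_le_iff₀ hR] at hrK
      nlinarith
    have hsinh : 0 ≤ Real.sinh (r*a)/r :=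
      div_nonneg (Real.sinh_nonneg_iff.2 (by positivity)) hr0.le
    have hFlow : c₁ * Real.exp (a*r) ≤ ‖F k‖ := by
      rw [hSnorm] at htri
      rw [hc₁, mul_comm a r]
      have hm1 : Rhat * (Real.exp (r*a)/2) ≤ Rhat * Real.cosh (r*a) :=
        mul_le_mul_of_nonneg_left hcosh hR.le
      have hm2 : (K/r) * Real.exp (r*a) ≤ (Rhat/4) * Real.exp (r*a) :=
        mul_le_mul_of_nonneg_right hKr (Real.exp_pos _).le
      linarith
    linarith
  -- positivity and log bounds
  have hevlog : ∀ᶠ r : ℝ in atTop,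
      Real.log c₁ + a*r ≤ Real.log (M r) ∧ Real.log (M r) ≤ Real.log c₂ + a*r := by
    filter_upwards [eventually_ge_atTop (max 1 (4*K/Rhat))] with r hr
    have hr1 : 1 ≤ r := le_trans (le_max_left _ _) hr
    have hlow := hlb r hr
    have hup := hub r hr1
    have hMpos : 0 < M r := lt_of_lt_of_le (by positivity) hlow
    constructor
    · calc Real.log c₁ + a*r = Real.log (c₁ * Real.exp (a*r)) := by
            rw [Real.log_mul hc₁pos.ne' (Real.exp_ne_zero _), Real.log_exp]
        _ ≤ Real.log (M r) := Real.log_le_log (by positivity) hlow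
    · calc Real.log (M r) ≤ Real.log (c₂ * Real.exp (a*r)) := Real.log_le_log hMpos hup
        _ = Real.log c₂ + a*r := by
            rw [Real.log_mul hc₂pos.ne' (Real.exp_ne_zero _), Real.log_exp]
  -- second limit: log M r / r → a
  have hT2 : Tendsto (fun r : ℝ => Real.log (M r) / r) atTop (𝓝 a) := by
    have hlo : Tendsto (fun r : ℝ => (Real.log c₁ + a*r) / r) atTop (𝓝 a) := by
      have h7 : Tendsto (fun r : ℝ => Real.log c₁ / r + a) atTop (𝓝 (0 + a)) :=
        ((tendsto_const_nhds : Tendsto (fun _ : ℝ => Real.log c₁) atTop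
          (𝓝 (Real.log c₁))).div_atTop tendsto_id).add tendsto_const_nhds
      rw [zero_add] at h7
      refine h7.congr' ?_
      filter_upwards [eventually_gt_atTop 0] with r hr
      field_simp
    have hhi : Tendsto (fun r : ℝ => (Real.log c₂ + a*r) / r) atTop (𝓝 a) := by
      have h7 : Tendsto (fun r : ℝ => Real.log c₂ / r + a) atTop (𝓝 (0 + a)) :=
        ((tendsto_const_nhds : Tendsto (fun _ : ℝ => Real.log c₂) atTop
          (𝓝 (Real.log c₂))).div_atTop tendsto_id).add tendsto_const_nhds
      rw [zero_add] at h7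
      refine h7.congr' ?_
      filter_upwards [eventually_gt_atTop 0] with r hr
      field_simp
    refine tendsto_of_tendsto_of_tendsto_of_le_of_le' hlo hhi ?_ ?_
    · filter_upwards [hevlog, eventually_gt_atTop 0] with r h hr
      exact div_le_div_of_nonneg_right h.1 hr.le
    · filter_upwards [hevlog, eventually_gt_atTop 0] with r h hr
      exact div_le_div_of_nonneg_right h.2 hr.le
  -- first limit: log log M r / log r → 1
  have hT1 : Tendsto (fun r : ℝ => Real.log (Real.log (M r)) / Real.log r) atTop (𝓝 1) := by
    have hlo := my_log_ratio a (Real.log c₁) ha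
    have hhi := my_log_ratio a (Real.log c₂) ha
    have hev2 : ∀ᶠ r : ℝ in atTop, 0 < a*r + Real.log c₁ := by
      have : Tendsto (fun r : ℝ => a*r + Real.log c₁) atTop atTop := by
        apply Filter.tendsto_atTop_add_const_right
        exact (tendsto_id.const_mul_atTop ha)
      exact this.eventually_gt_atTop 0
    refine tendsto_of_tendsto_of_tendsto_of_le_of_le' hlo hhi ?_ ?_
    · filter_upwards [hevlog, hev2, eventually_gt_atTop 1] with r h h2 hr
      have hlogr : 0 < Real.log r := Real.log_pos hr
      apply div_le_div_of_nonneg_right ?_ hlogr.le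
      have : a*r + Real.log c₁ ≤ Real.log (M r) := by linarith [h.1]
      exact Real.log_le_log h2 this
    · filter_upwards [hevlog, hev2, eventually_gt_atTop 1] with r h h2 hr
      have hlogr : 0 < Real.log r := Real.log_pos hr
      apply div_le_div_of_nonneg_right ?_ hlogr.le
      have hpos : 0 < Real.log (M r) := lt_of_lt_of_le h2 (by linarith [h.1])
      exact Real.log_le_log hpos (by linarith [h.2])
  exact ⟨hT1.limsup_eq, hT2.limsup_eq⟩
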